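/- arXiv:1812.06483 — 2 statements merged into one kernel-verified Lean document; each statement's English description precedes it below -/
import Mathlib

section
/- Let 𝒜 be a unital C*-algebra and (V, V⁺, e) an AOU 𝒜-space. Assume V carries a topology making it a Hausdorff topological complex vector space such that the involution v ↦ v* is continuous, the cone V⁺ is closed, and for every a ∈ 𝒜 the maps x ↦ a·x and x ↦ x·a are continuous. Then for every n ∈ ℕ, the cone C_n^{min}(V;𝒜) is a closed subset of M_n(V) in the entrywise (product) topology. (This is the content of Theorem 5.5: for a dual AOU 𝒜-space, the minimal operator 𝒜-system structure is a dual operator 𝒜-system structure.) -/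
open Matrix

noncomputable section

/-- An AOU `𝒜`-space: an Archimedean order unit *-vector space `(V, pos, e)` which is an
`A`-bimodule (actions `l`, `r`) satisfying `(a·x)* = x*·a*`, `a·e = e·a` and
`a*·x·a ∈ V⁺` for `x ∈ V⁺`. -/
structure AOUPack (A V : Type*) [Ring A] [StarRing A] [Algebra ℂ A]
    [AddCommGroup V] [Module ℂ V] [StarAddMonoid V] [StarModule ℂ V] where
  /-- the left action `a · x` -/
  l : A → V → V
  /-- the right action `x · a` -/
  r : V → A → V
  /-- the cone `V⁺` of positive elements -/
  pos : Set V
  /-- the Archimedean order unit -/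
  e : V
  l_add : ∀ a b x, l (a + b) x = l a x + l b x
  add_l : ∀ a x y, l a (x + y) = l a x + l a y
  smul_l : ∀ (c : ℂ) a x, l (c • a) x = c • l a x
  l_smul : ∀ (c : ℂ) a x, l a (c • x) = c • l a x
  r_add : ∀ x y a, r (x + y) a = r x a + r y a
  add_r : ∀ x a b, r x (a + b) = r x a + r x b
  smul_r : ∀ (c : ℂ) x a, r (c • x) a = c • r x a
  r_smul : ∀ (c : ℂ) x a, r x (c • a) = c • r x a
  mul_l : ∀ a b x, l (a * b) x = l a (l b x)
  mul_r : ∀ x a b, r x (a * b) = r (r x a) b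
  l_r_assoc : ∀ a x b, r (l a x) b = l a (r x b)
  one_l : ∀ x, l 1 x = x
  star_l : ∀ a x, star (l a x) = r (star x) (star a)
  pos_isSelfAdjoint : ∀ x ∈ pos, star x = x
  pos_add_mem : ∀ x ∈ pos, ∀ y ∈ pos, x + y ∈ pos
  pos_smul_mem : ∀ (t : ℝ), 0 ≤ t → ∀ x ∈ pos, (t : ℂ) • x ∈ pos
  pos_nonempty : pos.Nonempty
  pos_salient : ∀ x ∈ pos, -x ∈ pos → x = 0
  e_isSelfAdjoint : star e = e
  e_orderUnit : ∀ x, star x = x → ∃ t : ℝ, 0 < t ∧ (t : ℂ) • e - x ∈ pos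
  e_arch : ∀ x, (∀ t : ℝ, 0 < t → x + (t : ℂ) • e ∈ pos) → x ∈ pos
  e_comm : ∀ a, l a e = r e a
  conj_mem : ∀ a, ∀ x ∈ pos, r (l (star a) x) a ∈ pos

namespace AOUPack

variable {A V : Type*} [Ring A] [StarRing A] [Algebra ℂ A]
  [AddCommGroup V] [Module ℂ V] [StarAddMonoid V] [StarModule ℂ V]

variable (P : AOUPack A V)

/-- The action of a matrix over `A` on a matrix over `V` from the left:
`(M · X)_{ij} = Σ_p M_{ip} · X_{pj}`. -/
def amul {k m n : ℕ} (M : Matrix (Fin k) (Fin m) A) (X : Matrix (Fin m) (Fin n) V) :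
    Matrix (Fin k) (Fin n) V :=
  Matrix.of fun i j => ∑ p, P.l (M i p) (X p j)

/-- The action of a matrix over `A` on a matrix over `V` from the right:
`(X · N)_{ij} = Σ_p X_{ip} · N_{pj}`. -/
def vmul {m n l : ℕ} (X : Matrix (Fin m) (Fin n) V) (N : Matrix (Fin n) (Fin l) A) :
    Matrix (Fin m) (Fin l) V :=
  Matrix.of fun i j => ∑ p, P.r (X i p) (N p j)

/-- The congruence `M* · X · M` of `X ∈ M_m(V)` by `M ∈ M_{m,n}(A)`. -/
def conj {m n : ℕ} (M : Matrix (Fin m) (Fin n) A) (X : Matrix (Fin m) (Fin m) V) :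
    Matrix (Fin n) (Fin n) V :=
  P.vmul (P.amul Mᴴ X) M

/-- The diagonal matrix `e_n ∈ M_n(V)` with all diagonal entries equal to `e`. -/
def matE (n : ℕ) : Matrix (Fin n) (Fin n) V := Matrix.diagonal fun _ => P.e

/-- `C_n^{min}(V; A)`: hermitian `X ∈ M_n(V)` with `C* · X · C ∈ V⁺` for every
column `C ∈ M_{n,1}(A)`. -/
def Cmin (n : ℕ) : Set (Matrix (Fin n) (Fin n) V) :=
  {X | Xᴴ = X ∧ ∀ C : Matrix (Fin n) (Fin 1) A, P.conj C X 0 0 ∈ P.pos}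

/-- `D_n^{max}(V; A)`: finite sums `Σ_i A_i* · x_i · A_i` with `x_i ∈ V⁺` and
`A_i ∈ M_{1,n}(A)`. -/
def Dmax (n : ℕ) : Set (Matrix (Fin n) (Fin n) V) :=
  {X | ∃ (k : ℕ) (x : Fin k → V) (a : Fin k → Matrix (Fin 1) (Fin n) A),
    (∀ i, x i ∈ P.pos) ∧ X = ∑ i, P.conj (a i) (Matrix.of fun _ _ => x i)}

/-- `C_n^{max}(V; A) = {X : X + r e_n ∈ D_n^{max}(V; A) for all r > 0}`. -/
def Cmax (n : ℕ) : Set (Matrix (Fin n) (Fin n) V) :=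
  {X | ∀ t : ℝ, 0 < t → X + (t : ℂ) • P.matE n ∈ P.Dmax n}

/-- `Q` is an operator `A`-system structure on `V`: an `A`-compatible matrix ordering
with `Q 1 = V⁺` such that `e_n` is an Archimedean order unit for `Q n` for every `n`. -/
structure IsOperatorSystemStructure (Q : ∀ n : ℕ, Set (Matrix (Fin n) (Fin n) V)) : Prop where
  herm : ∀ n, ∀ X ∈ Q n, Xᴴ = X
  add_mem : ∀ n, ∀ X ∈ Q n, ∀ Y ∈ Q n, X + Y ∈ Q n
  smul_mem : ∀ n (t : ℝ), 0 ≤ t → ∀ X ∈ Q n, (t : ℂ) • X ∈ Q n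
  nonempty : ∀ n, (Q n).Nonempty
  salient : ∀ n, ∀ X ∈ Q n, -X ∈ Q n → X = 0
  compat : ∀ m n (X : Matrix (Fin m) (Fin m) V) (M : Matrix (Fin m) (Fin n) A),
    X ∈ Q m → P.conj M X ∈ Q n
  level_one : ∀ X : Matrix (Fin 1) (Fin 1) V, X ∈ Q 1 ↔ X 0 0 ∈ P.pos
  orderUnit : ∀ n (X : Matrix (Fin n) (Fin n) V), Xᴴ = X →
    ∃ t : ℝ, 0 < t ∧ (t : ℂ) • P.matE n - X ∈ Q n
  arch : ∀ n (X : Matrix (Fin n) (Fin n) V),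
    (∀ t : ℝ, 0 < t → X + (t : ℂ) • P.matE n ∈ Q n) → X ∈ Q n

end AOUPack

/-- Theorem 5.5 (content): on an AOU `𝒜`-space carrying a suitable linear topology
(Hausdorff, with continuous involution, closed cone and continuous module actions),
every cone `C_n^{min}(V;𝒜)` is closed in the entrywise topology on `M_n(V)`. -/
theorem cmin_isClosed
    {A V : Type*} [CStarAlgebra A]
    [AddCommGroup V] [Module ℂ V] [StarAddMonoid V] [StarModule ℂ V]
    [TopologicalSpace V] [T2Space V] [IsTopologicalAddGroup V] [ContinuousSMul ℂ V]
    [ContinuousStar V]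
    (P : AOUPack A V)
    (hpos : IsClosed P.pos)
    (hl : ∀ a : A, Continuous fun x : V => P.l a x)
    (hr : ∀ a : A, Continuous fun x : V => P.r x a)
    (n : ℕ) :
    IsClosed (P.Cmin n) := by
  have hentry : ∀ (i j : Fin n), Continuous fun X : Matrix (Fin n) (Fin n) V => X i j :=
    fun i j => (continuous_apply j).comp (continuous_apply i)
  have h1 : IsClosed {X : Matrix (Fin n) (Fin n) V | Xᴴ = X} := by
    apply isClosed_eq _ continuous_id
    exact continuous_pi fun i => continuous_pi fun j => (hentry j i).star
  have h2 : ∀ C : Matrix (Fin n) (Fin 1) A,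
      Continuous fun X : Matrix (Fin n) (Fin n) V => P.conj C X 0 0 := by
    intro C
    simp only [AOUPack.conj, AOUPack.vmul, AOUPack.amul, Matrix.of_apply]
    exact continuous_finset_sum _ fun p _ => (hr _).comp
      (continuous_finset_sum _ fun q _ => (hl _).comp (hentry q p))
  have hEq : P.Cmin n = {X | Xᴴ = X} ∩ ⋂ C : Matrix (Fin n) (Fin 1) A, {X | P.conj C X 0 0 ∈ P.pos} := by
    ext X
    simp only [AOUPack.Cmin, Set.mem_setOf_eq, Set.mem_inter_iff, Set.mem_iInter]
  rw [hEq]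
  exact h1.inter (isClosed_iInter fun C => hpos.preimage (h2 C))
end
end

section
/- Let 𝒜 be a unital C*-algebra and (V, V⁺, e) an AOU 𝒜-space. Assume V carries a topology making it a Hausdorff topological complex vector space, and give each M_n(V) the entrywise (product) topology. For n ∈ ℕ let W_n denote the closure of C_n^{max}(V;𝒜) in M_n(V). If (P_n)_{n∈ℕ} is any operator 𝒜-system structure on V such that each P_n is closed in M_n(V), then W_n ⊆ P_n for every n ∈ ℕ. (This is the minimality assertion of Theorem 5.7 for dual operator 𝒜-system structures.) -/
open Matrix

noncomputable section

/-- Theorem 5.7 (minimality): if `(P_n)` is an operator `𝒜`-system structure on `V`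
with each `P_n` closed in the entrywise topology, then the closure of
`C_n^{max}(V;𝒜)` is contained in `P_n` for every `n`. -/
theorem closure_cmax_subset_closed_opSysStructure
    {A V : Type*} [CStarAlgebra A]
    [AddCommGroup V] [Module ℂ V] [StarAddMonoid V] [StarModule ℂ V]
    [TopologicalSpace V] [T2Space V] [IsTopologicalAddGroup V] [ContinuousSMul ℂ V]
    (P : AOUPack A V) (Q : ∀ n : ℕ, Set (Matrix (Fin n) (Fin n) V))
    (hQ : P.IsOperatorSystemStructure Q)
    (hQclosed : ∀ n : ℕ, IsClosed (Q n)) :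
    ∀ n : ℕ, closure (P.Cmax n) ⊆ Q n := by
  intro n
  have hzero : (0 : Matrix (Fin n) (Fin n) V) ∈ Q n := by
    obtain ⟨Y, hY⟩ := hQ.nonempty n
    have h := hQ.smul_mem n 0 le_rfl Y hY
    simpa using h
  have hD : P.Dmax n ⊆ Q n := by
    rintro X ⟨k, x, a, hx, rfl⟩
    refine Finset.sum_induction _ (· ∈ Q n) (fun a b ha hb => hQ.add_mem n a ha b hb)
      hzero ?_
    intro i _
    exact hQ.compat 1 n _ (a i) ((hQ.level_one _).2 (hx i))
  have hC : P.Cmax n ⊆ Q n := fun X hX =>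
    hQ.arch n X fun t ht => hD (hX t ht)
  rw [← (hQclosed n).closure_eq]
  exact closure_mono hC
end
end
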